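/- arXiv:0809.4877 — 2 statements merged into one kernel-verified Lean document; each statement's English description precedes it below -/
import Mathlib

section
/- For 0 < t < n, the self-similar Cantor set C(t,a) ⊂ ℝ^n, built from a cube of side a by repeatedly keeping 2^n corner subcubes of side d·a where d ∈ (0, 1/2) satisfies 2^n d^t = 1, is t-regular. -/
open MeasureTheory Metric Set

/-- `E` is an `s`-regular (Ahlfors–David regular) subset of the metric space `X`,
with constant `C ≥ 1`, witnessed by the Borel (outer) measure `μ`:
`μ` vanishes off `E` and `r^s ≤ μ(B(x,r)) ≤ C r^s` for `x ∈ E`, `0 < r ≤ diam E`, `r < ∞`. -/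
def IsAhlforsRegular {X : Type*} [MetricSpace X] [MeasurableSpace X]
    (s C : ℝ) (E : Set X) (μ : Measure X) : Prop :=
  IsClosed E ∧ 1 ≤ C ∧ μ Eᶜ = 0 ∧
    ∀ x ∈ E, ∀ r : ℝ, 0 < r → ENNReal.ofReal r ≤ EMetric.diam E →
      ENNReal.ofReal (r ^ s) ≤ μ (closedBall x r) ∧
        μ (closedBall x r) ≤ ENNReal.ofReal (C * r ^ s)

/-- The similarity mapping the cube `[0,a]^n` onto the corner subcube of relative
side `d` sitting at the corner selected by `ε`. -/
def stdCornerMap (n : ℕ) (a d : ℝ) (ε : Fin n → Bool)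
    (x : EuclideanSpace ℝ (Fin n)) : EuclideanSpace ℝ (Fin n) :=
  WithLp.toLp 2 (fun i => d * x i + (if ε i then (1 - d) * a else 0))

/-- The `k`-th generation of the Cantor construction: the union of the `2^(nk)`
cubes of side `d^k a` obtained by iterating the corner maps on the cube `[0,a]^n`. -/
def stdCantorApprox (n : ℕ) (a d : ℝ) : ℕ → Set (EuclideanSpace ℝ (Fin n))
  | 0 => {x | ∀ i, x i ∈ Set.Icc 0 a}
  | k + 1 => ⋃ ε : Fin n → Bool, stdCornerMap n a d ε '' stdCantorApprox n a d k

/-- The standard self-similar Cantor set `C(t,a) ⊂ ℝⁿ`, built from a cube of side `a`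
by repeatedly keeping the `2^n` corner subcubes of relative side `d` with `2^n d^t = 1`,
i.e. `d = 2^(-n/t)`. -/
noncomputable def stdCantorSet (n : ℕ) (t a : ℝ) : Set (EuclideanSpace ℝ (Fin n)) :=
  ⋂ k : ℕ, stdCantorApprox n a ((2 : ℝ) ^ (-(n : ℝ) / t)) k

namespace Stmt9Aux
open Finset ENNReal

abbrev Omega (n : ℕ) := ℕ → Fin n → Bool

variable (n : ℕ) (a d : ℝ)


variable (n : ℕ) (a d : ℝ)

noncomputable def cbase {k : ℕ} (σ : Fin k → Fin n → Bool) (i : Fin n) : ℝ :=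
  ∑ j : Fin k, d ^ (j : ℕ) * (if σ j i then (1 - d) * a else 0)

def cube {k : ℕ} (σ : Fin k → Fin n → Bool) : Set (EuclideanSpace ℝ (Fin n)) :=
  {x | ∀ i, x i ∈ Set.Icc (cbase n a d σ i) (cbase n a d σ i + d ^ k * a)}

lemma cbase_cons {k : ℕ} (ε : Fin n → Bool) (σ : Fin k → Fin n → Bool) (i : Fin n) :
    cbase n a d (Fin.cons ε σ) i
      = (if ε i then (1 - d) * a else 0) + d * cbase n a d σ i := by
  simp only [cbase, Fin.sum_univ_succ, Fin.cons_zero, Fin.cons_succ, Fin.val_zero,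
    Fin.val_succ, pow_zero, pow_succ, one_mul, Finset.mul_sum]
  congr 1
  exact Finset.sum_congr rfl fun j _ => by ring

lemma image_cube (hd : 0 < d) {k : ℕ} (ε : Fin n → Bool) (σ : Fin k → Fin n → Bool) :
    stdCornerMap n a d ε '' cube n a d σ = cube n a d (Fin.cons ε σ) := by
  ext y
  constructor
  · rintro ⟨x, hx, rfl⟩ i
    have h := hx i
    simp only [stdCornerMap, PiLp.toLp_apply, cbase_cons, Set.mem_Icc] at *
    have h1 := mul_le_mul_of_nonneg_left h.1 hd.le
    have h2 := mul_le_mul_of_nonneg_left h.2 hd.le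
    have e : d * (cbase n a d σ i + d ^ k * a) = d * cbase n a d σ i + d ^ (k+1) * a := by ring
    constructor <;> [linarith; linarith [e ▸ h2]]
  · intro hy
    refine ⟨WithLp.toLp 2 (fun i => (y i - (if ε i then (1 - d) * a else 0)) / d), fun i => ?_, PiLp.ext fun i => ?_⟩
    · have h := hy i
      simp only [cbase_cons, Set.mem_Icc] at h
      rw [Set.mem_Icc, le_div_iff₀ hd, div_le_iff₀ hd]
      have e1 : cbase n a d σ i * d = d * cbase n a d σ i := by ring
      have e2 : (cbase n a d σ i + d ^ k * a) * d = d * cbase n a d σ i + d ^ (k+1) * a := by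
        ring
      constructor <;> [linarith [e1]; linarith [e2]]
    · show d * _ + _ = y i
      field_simp
      ring

lemma approx_eq (hd : 0 < d) (k : ℕ) :
    stdCantorApprox n a d k = ⋃ σ : Fin k → Fin n → Bool, cube n a d σ := by
  induction k with
  | zero =>
      ext x
      simp only [stdCantorApprox, Set.mem_iUnion, cube, Set.mem_setOf_eq, cbase]
      constructor
      · intro h; exact ⟨Fin.elim0, by simpa using h⟩
      · rintro ⟨σ, h⟩; simpa using h
  | succ k ih =>
      rw [show stdCantorApprox n a d (k+1)
          = ⋃ ε : Fin n → Bool, stdCornerMap n a d ε '' stdCantorApprox n a d k from rfl, ih]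
      ext y
      simp only [Set.mem_iUnion, Set.image_iUnion]
      constructor
      · rintro ⟨ε, σ, hy⟩
        exact ⟨Fin.cons ε σ, by rwa [image_cube n a d hd] at hy⟩
      · rintro ⟨σ, hy⟩
        refine ⟨σ 0, Fin.tail σ, ?_⟩
        rw [image_cube n a d hd, Fin.cons_self_tail]
        exact hy

lemma cbase_nonneg (ha : 0 ≤ a) (hd0 : 0 ≤ d) (hd1 : d ≤ 1) {k : ℕ}
    (σ : Fin k → Fin n → Bool) (i : Fin n) : 0 ≤ cbase n a d σ i := by
  refine Finset.sum_nonneg fun j _ => ?_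
  have : (0:ℝ) ≤ (if σ j i then (1 - d) * a else 0) := by
    split <;> nlinarith
  positivity

lemma cbase_add_le (ha : 0 ≤ a) (hd0 : 0 ≤ d) (hd1 : d ≤ 1) {k : ℕ}
    (σ : Fin k → Fin n → Bool) (i : Fin n) : cbase n a d σ i + d ^ k * a ≤ a := by
  have h1 : cbase n a d σ i ≤ ∑ j : Fin k, d ^ (j:ℕ) * ((1 - d) * a) := by
    refine Finset.sum_le_sum fun j _ => ?_
    have hp : (0:ℝ) ≤ d ^ (j:ℕ) := pow_nonneg hd0 _
    have : (if σ j i then (1 - d) * a else 0) ≤ (1 - d) * a := by split <;> nlinarith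
    exact mul_le_mul_of_nonneg_left this hp
  have h2 : ∑ j : Fin k, d ^ (j:ℕ) * ((1 - d) * a) = (1 - d ^ k) * a := by
    rw [Fin.sum_univ_eq_sum_range (fun j => d ^ j * ((1 - d) * a)) k, ← Finset.sum_mul]
    have h3 := geom_sum_mul d k
    linear_combination (-a) * h3
  nlinarith [pow_nonneg hd0 k]




lemma coord_le_dist (x y : EuclideanSpace ℝ (Fin n)) (i : Fin n) : |x i - y i| ≤ dist x y := by
  rw [EuclideanSpace.dist_eq]
  have h1 : |x i - y i| = Real.sqrt (dist (x i) (y i) ^ 2) := by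
    rw [Real.sqrt_sq_eq_abs, Real.dist_eq, abs_abs]
  rw [h1]
  apply Real.sqrt_le_sqrt
  exact Finset.single_le_sum (f := fun j => dist (x j) (y j) ^ 2)
    (fun j _ => sq_nonneg _) (Finset.mem_univ i)

lemma dist_le_of_coord (x y : EuclideanSpace ℝ (Fin n)) (c : ℝ) (hc : 0 ≤ c)
    (h : ∀ i, |x i - y i| ≤ c) : dist x y ≤ Real.sqrt n * c := by
  rw [EuclideanSpace.dist_eq]
  have hs : ∑ i, dist (x i) (y i) ^ 2 ≤ (n : ℝ) * c ^ 2 := by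
    calc ∑ i, dist (x i) (y i) ^ 2 ≤ ∑ _i : Fin n, c ^ 2 := by
          refine Finset.sum_le_sum fun i _ => ?_
          rw [Real.dist_eq, sq_abs]
          have h2 := abs_le.1 (h i)
          exact sq_le_sq' (by linarith [h2.1]) h2.2
      _ = (n : ℝ) * c ^ 2 := by simp [Finset.sum_const, Finset.card_univ]
  calc Real.sqrt (∑ i, dist (x i) (y i) ^ 2) ≤ Real.sqrt ((n:ℝ) * c ^ 2) :=
        Real.sqrt_le_sqrt hs
    _ = Real.sqrt n * c := by
        rw [Real.sqrt_mul (Nat.cast_nonneg n), Real.sqrt_sq hc]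

lemma dist_cornerMap (hd : 0 ≤ d) (ε : Fin n → Bool) (x y : EuclideanSpace ℝ (Fin n)) :
    dist (stdCornerMap n a d ε x) (stdCornerMap n a d ε y) = d * dist x y := by
  rw [EuclideanSpace.dist_eq, EuclideanSpace.dist_eq]
  have h1 : ∀ i, dist (stdCornerMap n a d ε x i) (stdCornerMap n a d ε y i)
      = d * dist (x i) (y i) := by
    intro i
    rw [Real.dist_eq, Real.dist_eq]
    show |d * x i + (if ε i then (1-d)*a else 0) - (d * y i + (if ε i then (1-d)*a else 0))|
        = d * |x i - y i|
    rw [show d * x i + (if ε i then (1-d)*a else 0)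
        - (d * y i + (if ε i then (1-d)*a else 0)) = d * (x i - y i) from by ring,
      abs_mul, abs_of_nonneg hd]
  simp_rw [h1, mul_pow, ← Finset.mul_sum]
  rw [Real.sqrt_mul (sq_nonneg d), Real.sqrt_sq hd]



lemma mem_level_one (ha : 0 ≤ a) (hd0 : 0 ≤ d) (hd1 : d ≤ 1) {k : ℕ}
    (σ : Fin (k+1) → Fin n → Bool) (p : EuclideanSpace ℝ (Fin n)) (hp : p ∈ cube n a d σ)
    (i : Fin n) :
    p i ∈ Set.Icc (if σ 0 i then (1-d)*a else 0) ((if σ 0 i then (1-d)*a else 0) + d * a) := by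
  have hσ : σ = Fin.cons (σ 0) (Fin.tail σ) := (Fin.cons_self_tail σ).symm
  rw [hσ] at hp
  have h := hp i
  rw [Set.mem_Icc, cbase_cons] at h
  have hb0 := cbase_nonneg n a d ha hd0 hd1 (Fin.tail σ) i
  have hb1 := cbase_add_le n a d ha hd0 hd1 (Fin.tail σ) i
  have e : d ^ (k+1) * a = d * (d ^ k * a) := by ring
  constructor
  · have : 0 ≤ d * cbase n a d (Fin.tail σ) i := mul_nonneg hd0 hb0
    simp only [Fin.cons_zero] at h ⊢
    linarith [h.1]
  · have h2 : d * cbase n a d (Fin.tail σ) i + d ^ (k+1) * a ≤ d * a := by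
      rw [e, ← mul_add]
      exact mul_le_mul_of_nonneg_left hb1 hd0
    simp only [Fin.cons_zero] at h ⊢
    linarith [h.2]

lemma sep_first (ha : 0 ≤ a) (hd0 : 0 ≤ d) (hd2 : d < 1/2) {k : ℕ}
    (σ σ' : Fin (k+1) → Fin n → Bool) (i : Fin n) (hi : σ 0 i ≠ σ' 0 i)
    (p q : EuclideanSpace ℝ (Fin n)) (hp : p ∈ cube n a d σ) (hq : q ∈ cube n a d σ') :
    (1 - 2*d) * a ≤ dist p q := by
  have hd1 : d ≤ 1 := by linarith
  have h1 := mem_level_one n a d ha hd0 hd1 σ p hp i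
  have h2 := mem_level_one n a d ha hd0 hd1 σ' q hq i
  have key : (1 - 2*d) * a ≤ |p i - q i| := by
    rcases Bool.eq_false_or_eq_true (σ 0 i) with hb | hb <;>
      rcases Bool.eq_false_or_eq_true (σ' 0 i) with hb' | hb' <;>
      simp [hb, hb'] at hi h1 h2 ⊢
    · calc (1 - 2*d) * a ≤ p i - q i := by nlinarith [h1.1, h2.2]
        _ ≤ |p i - q i| := le_abs_self _
    · calc (1 - 2*d) * a ≤ q i - p i := by nlinarith [h1.2, h2.1]
        _ ≤ |p i - q i| := by rw [abs_sub_comm]; exact le_abs_self _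
  exact key.trans (coord_le_dist n p q i)

lemma first_ne_of_ne {k : ℕ} {σ σ' : Fin (k+1) → Fin n → Bool} (h : σ 0 ≠ σ' 0) :
    ∃ i, σ 0 i ≠ σ' 0 i := by
  by_contra hc
  push_neg at hc
  exact h (funext hc)

lemma separation (ha : 0 ≤ a) (hd0 : 0 < d) (hd2 : d < 1/2) :
    ∀ (k : ℕ) (σ σ' : Fin (k+1) → Fin n → Bool), σ ≠ σ' →
    ∀ p ∈ cube n a d σ, ∀ q ∈ cube n a d σ',
      (1 - 2*d) * (d ^ k * a) ≤ dist p q := by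
  intro k
  induction k with
  | zero =>
      intro σ σ' hne p hp q hq
      have h0 : σ 0 ≠ σ' 0 := by
        intro h
        exact hne (funext fun j => by
          have hj : j = 0 := Fin.ext (by simpa using Nat.lt_one_iff.1 j.isLt)
          rw [hj, h])
      obtain ⟨i, hi⟩ := first_ne_of_ne n h0
      simpa using sep_first n a d ha hd0.le hd2 σ σ' i hi p q hp hq
  | succ k ih =>
      intro σ σ' hne p hp q hq
      by_cases h0 : σ 0 = σ' 0
      · have htl : Fin.tail σ ≠ Fin.tail σ' := by
          intro h
          apply hne
          rw [← Fin.cons_self_tail σ, ← Fin.cons_self_tail σ', h0, h]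
        rw [← Fin.cons_self_tail σ, ← image_cube n a d hd0] at hp
        rw [← Fin.cons_self_tail σ', ← image_cube n a d hd0] at hq
        obtain ⟨p₀, hp₀, rfl⟩ := hp
        obtain ⟨q₀, hq₀, rfl⟩ := hq
        rw [h0, dist_cornerMap n a d hd0.le]
        have := ih (Fin.tail σ) (Fin.tail σ') htl p₀ hp₀ q₀ hq₀
        calc (1 - 2*d) * (d ^ (k+1) * a) = d * ((1 - 2*d) * (d ^ k * a)) := by ring
          _ ≤ d * dist p₀ q₀ := mul_le_mul_of_nonneg_left this hd0.le
      · obtain ⟨i, hi⟩ := first_ne_of_ne n h0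
        have h1 := sep_first n a d ha hd0.le hd2 σ σ' i hi p q hp hq
        have hpow : d ^ (k+1) ≤ 1 := pow_le_one₀ hd0.le (by linarith)
        have hkey : (1 - 2*d) * (d ^ (k+1) * a) ≤ (1 - 2*d) * a := by
          nlinarith [mul_nonneg (mul_nonneg (by linarith : (0:ℝ) ≤ 1 - 2*d) ha)
            (by linarith : (0:ℝ) ≤ 1 - d ^ (k+1))]
        linarith

lemma dist_le_of_mem_cube (ha : 0 ≤ a) (hd0 : 0 ≤ d) {k : ℕ}
    (σ : Fin k → Fin n → Bool) (p q : EuclideanSpace ℝ (Fin n))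
    (hp : p ∈ cube n a d σ) (hq : q ∈ cube n a d σ) :
    dist p q ≤ Real.sqrt n * (d ^ k * a) := by
  refine dist_le_of_coord n p q _ (by positivity) fun i => ?_
  have h1 := hp i
  have h2 := hq i
  rw [Set.mem_Icc] at h1 h2
  rw [abs_le]
  constructor <;> [linarith [h1.1, h2.2]; linarith [h1.2, h2.1]]




noncomputable def nuK (n : ℕ) : TopologicalSpace.PositiveCompacts (Omega n) :=
  ⟨⟨Set.univ, isCompact_univ⟩, by simp⟩

noncomputable def nu (n : ℕ) : Measure (Omega n) := Measure.addHaarMeasure (nuK n)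

lemma nu_univ : nu n Set.univ = 1 := by
  have := Measure.addHaarMeasure_self (K₀ := nuK n)
  simpa [nu, nuK] using this

def Cyl {k : ℕ} (σ : Fin k → Fin n → Bool) : Set (Omega n) :=
  {ω | ∀ j : Fin k, ω (j : ℕ) = σ j}

lemma measurableSet_cyl {k : ℕ} (σ : Fin k → Fin n → Bool) : MeasurableSet (Cyl n σ) := by
  have : Cyl n σ = ⋂ j : Fin k, (fun ω : Omega n => ω (j : ℕ)) ⁻¹' {σ j} := by
    ext ω; simp [Cyl]
  rw [this]
  exact MeasurableSet.iInter fun j => (measurable_pi_apply _) (measurableSet_singleton _)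

def emb {k : ℕ} (σ : Fin k → Fin n → Bool) : Omega n :=
  fun j => if h : j < k then σ ⟨j, h⟩ else 0

lemma cyl_eq_preimage {k : ℕ} (σ : Fin k → Fin n → Bool) :
    Cyl n σ = (fun ω => emb n σ + ω) ⁻¹' (Cyl n (0 : Fin k → Fin n → Bool)) := by
  ext ω
  simp only [Cyl, Set.mem_preimage, Set.mem_setOf_eq, Pi.add_apply]
  constructor
  · intro h j
    rw [h j]
    funext i
    have hj : (j:ℕ) < k := j.isLt
    simp only [Pi.add_apply, emb, hj, dif_pos, Pi.zero_apply]
    cases σ j i <;> rfl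
  · intro h j
    have := h j
    funext i
    have hi := congrFun this i
    simp only [emb, j.isLt, dif_pos, Pi.add_apply, Pi.zero_apply] at hi
    -- hi : xor (σ j i) (ω j i)... : (σ j i + ω j i) = 0
    revert hi
    cases σ j i <;> cases ω (j:ℕ) i <;> decide

lemma cyl_disjoint {k : ℕ} : Pairwise (Function.onFun Disjoint (fun σ : Fin k → Fin n → Bool => Cyl n σ)) := by
  intro σ σ' hne
  refine Set.disjoint_left.2 fun ω h h' => hne (funext fun j => ?_)
  rw [← h j, ← h' j]

lemma cyl_cover {k : ℕ} : (⋃ σ : Fin k → Fin n → Bool, Cyl n σ) = Set.univ := by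
  ext ω
  simp only [Set.mem_iUnion, Set.mem_univ, iff_true]
  exact ⟨fun j => ω (j : ℕ), fun j => rfl⟩

instance : (nu n).IsAddLeftInvariant := by unfold nu; infer_instance

lemma nu_cyl_eq {k : ℕ} (σ σ' : Fin k → Fin n → Bool) : nu n (Cyl n σ) = nu n (Cyl n σ') := by
  have h1 := cyl_eq_preimage n σ
  have h2 := cyl_eq_preimage n σ'
  rw [h1, h2, measure_preimage_add, measure_preimage_add]

lemma nu_cyl {k : ℕ} (σ : Fin k → Fin n → Bool) :
    nu n (Cyl n σ) = ((2 : ℝ≥0∞) ^ (n * k))⁻¹ := by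
  classical
  have hsum : ∑ σ' : Fin k → Fin n → Bool, nu n (Cyl n σ') = 1 := by
    have h1 : nu n Set.univ = ∑' σ' : Fin k → Fin n → Bool, nu n (Cyl n σ') := by
      rw [← cyl_cover n (k := k), measure_iUnion (cyl_disjoint n)
        (fun σ' => measurableSet_cyl n σ')]
    rw [nu_univ, tsum_fintype] at h1
    exact h1.symm
  have hconst : ∑ σ' : Fin k → Fin n → Bool, nu n (Cyl n σ')
      = (Fintype.card (Fin k → Fin n → Bool)) • nu n (Cyl n σ) := by
    rw [Finset.sum_congr rfl fun σ' _ => nu_cyl_eq n σ' σ, Finset.sum_const, Fintype.card]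
  have hcard : (Fintype.card (Fin k → Fin n → Bool)) = 2 ^ (n * k) := by
    rw [Fintype.card_fun, Fintype.card_fun]
    simp [pow_mul, mul_comm]
  rw [hconst, hcard] at hsum
  have hmul : ((2 : ℝ≥0∞) ^ (n * k)) * nu n (Cyl n σ) = 1 := by
    rw [← hsum, nsmul_eq_mul]
    norm_num
  have ha0 : ((2 : ℝ≥0∞) ^ (n * k)) ≠ 0 := pow_ne_zero _ (by norm_num)
  have hat : ((2 : ℝ≥0∞) ^ (n * k)) ≠ ⊤ := ENNReal.pow_ne_top (by norm_num)
  calc nu n (Cyl n σ) = (((2 : ℝ≥0∞) ^ (n * k))⁻¹ * ((2 : ℝ≥0∞) ^ (n * k))) * nu n (Cyl n σ) := by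
        rw [ENNReal.inv_mul_cancel ha0 hat, one_mul]
    _ = ((2 : ℝ≥0∞) ^ (n * k))⁻¹ * (((2 : ℝ≥0∞) ^ (n * k)) * nu n (Cyl n σ)) := by
        rw [mul_assoc]
    _ = ((2 : ℝ≥0∞) ^ (n * k))⁻¹ := by rw [hmul, mul_one]



noncomputable def pim (ω : Omega n) : EuclideanSpace ℝ (Fin n) :=
  WithLp.toLp 2 (fun i => ∑' k : ℕ, d ^ k * (if ω k i then (1 - d) * a else 0))

lemma pim_summable (ha : 0 ≤ a) (hd0 : 0 ≤ d) (hd1 : d < 1) (ω : Omega n) (i : Fin n) :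
    Summable (fun k : ℕ => d ^ k * (if ω k i then (1 - d) * a else 0)) := by
  apply Summable.of_nonneg_of_le (fun k => ?_) (fun k => ?_)
    (Summable.mul_right ((1 - d) * a) (summable_geometric_of_lt_one hd0 hd1))
  · have : (0:ℝ) ≤ (if ω k i then (1 - d) * a else 0) := by split <;> nlinarith
    positivity
  · have : (if ω k i then (1 - d) * a else 0) ≤ (1 - d) * a := by split <;> nlinarith
    exact mul_le_mul_of_nonneg_left this (pow_nonneg hd0 _)

lemma pim_continuous (ha : 0 ≤ a) (hd0 : 0 ≤ d) (hd1 : d < 1) :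
    Continuous (pim n a d) := by
  have : Continuous (fun ω : Omega n => (fun i => ∑' k : ℕ,
      d ^ k * (if ω k i then (1 - d) * a else 0) : Fin n → ℝ)) := by
    refine continuous_pi fun i => ?_
    refine continuous_tsum (f := fun k (ω : Omega n) =>
        d ^ k * (if ω k i then (1 - d) * a else 0))
      (fun k => ?_) (Summable.mul_right ((1 - d) * a) (summable_geometric_of_lt_one hd0 hd1))
      (fun k ω => ?_)
    · exact ((continuous_of_discreteTopology (α := Bool)
        (f := fun b => d ^ k * (if b then (1 - d) * a else 0))).comp
        ((continuous_apply i).comp (continuous_apply k)))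
    · rw [Real.norm_eq_abs, abs_mul, abs_pow, abs_of_nonneg hd0]
      have h1 : |if ω k i then (1 - d) * a else 0| ≤ (1 - d) * a := by
        split
        · rw [abs_of_nonneg (by nlinarith)]
        · simp; nlinarith
      exact mul_le_mul_of_nonneg_left h1 (pow_nonneg hd0 _)
  exact (PiLp.continuous_toLp (p := 2) (β := fun _ : Fin n => ℝ)).comp this



lemma pim_mem_cube' (ha : 0 ≤ a) (hd0 : 0 ≤ d) (hd1 : d < 1) (ω : Omega n) (k : ℕ) (i : Fin n) :
    pim n a d ω i ∈ Set.Icc (cbase n a d (fun j : Fin k => ω (j : ℕ)) i)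
      (cbase n a d (fun j : Fin k => ω (j : ℕ)) i + d ^ k * a) := by
  have hsum := pim_summable n a d ha hd0 hd1 ω i
  set f := fun m : ℕ => d ^ m * (if ω m i then (1 - d) * a else 0) with hf
  have hsplit := Summable.sum_add_tsum_nat_add k hsum
  have hhead : ∑ m ∈ Finset.range k, f m = cbase n a d (fun j : Fin k => ω (j : ℕ)) i := by
    rw [cbase, Fin.sum_univ_eq_sum_range (fun m => d ^ m * (if ω m i then (1 - d) * a else 0)) k]
  have htail0 : 0 ≤ ∑' m, f (m + k) := by
    refine tsum_nonneg fun m => ?_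
    have : (0:ℝ) ≤ (if ω (m + k) i then (1 - d) * a else 0) := by split <;> nlinarith
    positivity
  have htailsum : Summable fun m => f (m + k) := (summable_nat_add_iff k).2 hsum
  have htail1 : ∑' m, f (m + k) ≤ d ^ k * a := by
    have hb : ∀ m, f (m + k) ≤ d ^ m * (d ^ k * ((1 - d) * a)) := by
      intro m
      have h1 : (if ω (m + k) i then (1 - d) * a else 0) ≤ (1 - d) * a := by
        split <;> nlinarith
      have h2 := mul_le_mul_of_nonneg_left h1 (pow_nonneg hd0 (m + k))
      calc f (m + k) ≤ d ^ (m + k) * ((1 - d) * a) := h2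
        _ = d ^ m * (d ^ k * ((1 - d) * a)) := by rw [pow_add]; ring
    calc ∑' m, f (m + k) ≤ ∑' m, d ^ m * (d ^ k * ((1 - d) * a)) :=
          Summable.tsum_le_tsum hb htailsum
            (Summable.mul_right _ (summable_geometric_of_lt_one hd0 hd1))
      _ = (1 - d)⁻¹ * (d ^ k * ((1 - d) * a)) := by
          rw [tsum_mul_right, tsum_geometric_of_lt_one hd0 hd1, mul_comm]
      _ = d ^ k * a := by
          have : (1:ℝ) - d ≠ 0 := by linarith
          field_simp
  have hpi : pim n a d ω i = ∑' m, f m := rfl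
  rw [hpi, ← hsplit, hhead, Set.mem_Icc]
  constructor <;> linarith


end Stmt9Aux

open Stmt9Aux in
theorem stmt9 (n : ℕ) (t a : ℝ) (ht : 0 < t) (htn : t < n) (ha : 0 < a) :
    ∃ (C : ℝ) (μ : Measure (EuclideanSpace ℝ (Fin n))),
      IsAhlforsRegular t C (stdCantorSet n t a) μ := by
  classical
  set d : ℝ := (2 : ℝ) ^ (-(n : ℝ) / t) with hd_def
  have hn0 : (0:ℝ) < n := lt_trans ht htn
  have hn1 : (1:ℝ) ≤ n := by
    have : 1 ≤ n := by exact_mod_cast Nat.one_le_iff_ne_zero.2 (by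
      rintro rfl; simp at hn0)
    exact_mod_cast this
  have hd0 : 0 < d := Real.rpow_pos_of_pos (by norm_num) _
  have hd2 : d < 1/2 := by
    have h1 : -(n:ℝ)/t < -1 := by
      rw [div_lt_iff₀ ht]
      nlinarith
    have h2 : d < (2:ℝ) ^ (-1 : ℝ) := by
      rw [hd_def]
      exact Real.rpow_lt_rpow_left_iff (by norm_num : (1:ℝ) < 2) |>.2 h1
    calc d < (2:ℝ) ^ (-1 : ℝ) := h2
      _ = 1/2 := by rw [Real.rpow_neg_one]; norm_num
  have hd1 : d < 1 := by linarith
  have hdt : d ^ t = ((2:ℝ) ^ (n : ℕ))⁻¹ := by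
    rw [hd_def, ← Real.rpow_natCast 2 n, ← Real.rpow_neg (by norm_num),
      ← Real.rpow_mul (by norm_num)]
    congr 1
    field_simp
  have hsq1 : (1:ℝ) ≤ Real.sqrt n := by
    rw [show (1:ℝ) = Real.sqrt 1 by simp]
    exact Real.sqrt_le_sqrt hn1
  have hsq0 : (0:ℝ) < Real.sqrt n := by linarith
  set lam : ℝ := (Real.sqrt n * a / d) ^ t with hlam_def
  have hlampos : 0 < lam := Real.rpow_pos_of_pos (by positivity) _
  set Cb : ℝ := 2 * Real.sqrt n / (d * (1 - 2*d)) with hCb_def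
  have hCb1 : 1 ≤ Cb := by
    rw [hCb_def, le_div_iff₀ (by nlinarith)]
    nlinarith
  set C : ℝ := Cb ^ t with hC_def
  have hC1 : 1 ≤ C := by
    rw [hC_def, show (1:ℝ) = 1 ^ t by rw [Real.one_rpow]]
    exact Real.rpow_le_rpow (by norm_num) hCb1 ht.le
  -- the measure
  set ν : Measure (Omega n) := nu n with hν_def
  have hpimc := pim_continuous n a d ha.le hd0.le hd1
  have hpimm : Measurable (pim n a d) := hpimc.measurable
  set μ : Measure (EuclideanSpace ℝ (Fin n)) :=
    (ENNReal.ofReal lam) • (Measure.map (pim n a d) ν) with hμ_def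
  have happrox := approx_eq n a d hd0
  have hEdef : stdCantorSet n t a = ⋂ k : ℕ, stdCantorApprox n a d k := rfl
  -- closedness
  have hcube_closed : ∀ {k : ℕ} (σ : Fin k → Fin n → Bool), IsClosed (cube n a d σ) := by
    intro k σ
    have hc : ∀ i : Fin n, Continuous fun x : EuclideanSpace ℝ (Fin n) => x i := fun i =>
      (continuous_apply i).comp (PiLp.continuous_ofLp (p := 2) (β := fun _ : Fin n => ℝ))
    have : cube n a d σ = ⋂ i, (fun x : EuclideanSpace ℝ (Fin n) => x i) ⁻¹'
        Set.Icc (cbase n a d σ i) (cbase n a d σ i + d ^ k * a) := by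
      ext x; simp [cube, Set.mem_iInter]
    rw [this]
    exact isClosed_iInter fun i => IsClosed.preimage (hc i) isClosed_Icc
  have hEclosed : IsClosed (stdCantorSet n t a) := by
    rw [hEdef]
    exact isClosed_iInter fun k => by
      rw [happrox k]; exact isClosed_iUnion_of_finite fun σ => hcube_closed σ
  -- pim maps into E
  have hpimE : ∀ ω : Omega n, pim n a d ω ∈ stdCantorSet n t a := by
    intro ω
    rw [hEdef]
    refine Set.mem_iInter.2 fun k => ?_
    rw [happrox k]
    exact Set.mem_iUnion.2 ⟨fun j : Fin k => ω (j : ℕ),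
      fun i => pim_mem_cube' n a d ha.le hd0.le hd1 ω k i⟩
  -- μ of measurable sets
  have hμapp : ∀ s : Set (EuclideanSpace ℝ (Fin n)), MeasurableSet s →
      μ s = ENNReal.ofReal lam * ν ((pim n a d) ⁻¹' s) := by
    intro s hs
    rw [hμ_def, Measure.smul_apply, smul_eq_mul, Measure.map_apply hpimm hs]
  -- vanishing off E
  have hμcompl : μ (stdCantorSet n t a)ᶜ = 0 := by
    rw [hμapp _ hEclosed.measurableSet.compl]
    have : (pim n a d) ⁻¹' (stdCantorSet n t a)ᶜ = ∅ := by
      ext ω; simp [hpimE ω]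
    rw [this, measure_empty, mul_zero]
  -- conversion
  have hconv : ∀ k : ℕ, ((2 : ENNReal) ^ (n * k))⁻¹ = ENNReal.ofReal ((d ^ k) ^ t) := by
    intro k
    have hreal : ((d:ℝ) ^ k) ^ t = ((2:ℝ) ^ (n * k))⁻¹ := by
      rw [← Real.rpow_natCast d k, ← Real.rpow_mul hd0.le, mul_comm (k:ℝ) t,
        Real.rpow_mul hd0.le, Real.rpow_natCast, hdt, inv_pow, ← pow_mul]
    rw [hreal, ENNReal.ofReal_inv_of_pos (by positivity), ENNReal.ofReal_pow (by norm_num)]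
    norm_num
  -- diameter bound
  have hdiamE : EMetric.diam (stdCantorSet n t a) ≤ ENNReal.ofReal (Real.sqrt n * a) := by
    refine EMetric.diam_le fun p hp q hq => ?_
    rw [hEdef] at hp hq
    have hp0 := Set.mem_iInter.1 hp 0
    have hq0 := Set.mem_iInter.1 hq 0
    rw [happrox 0] at hp0 hq0
    obtain ⟨σp, hσp⟩ := Set.mem_iUnion.1 hp0
    obtain ⟨σq, hσq⟩ := Set.mem_iUnion.1 hq0
    have hσ : σp = σq := Subsingleton.elim _ _
    rw [hσ] at hσp
    have := dist_le_of_mem_cube n a d ha.le hd0.le σq p q hσp hσq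
    rw [edist_dist]
    exact ENNReal.ofReal_le_ofReal (by simpa using this)
  refine ⟨C, μ, hEclosed, hC1, hμcompl, fun x hx r hr hrd => ?_⟩
  have hrsq : r ≤ Real.sqrt n * a :=
    (ENNReal.ofReal_le_ofReal_iff (by positivity)).1 (le_trans hrd hdiamE)
  constructor
  · -- lower bound
    have hex : ∃ m : ℕ, Real.sqrt (n:ℝ) * (d ^ m * a) ≤ r := by
      obtain ⟨m, hm⟩ := exists_pow_lt_of_lt_one
        (show (0:ℝ) < r / (Real.sqrt (n:ℝ) * a) by positivity) hd1
      refine ⟨m, ?_⟩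
      have := (lt_div_iff₀ (by positivity : (0:ℝ) < Real.sqrt (n:ℝ) * a)).1 hm
      nlinarith
    obtain ⟨m, hPm, hmmin⟩ : ∃ m, Real.sqrt (n:ℝ) * (d ^ m * a) ≤ r ∧
        ∀ j < m, r < Real.sqrt (n:ℝ) * (d ^ j * a) := by
      refine ⟨Nat.find hex, Nat.find_spec hex, fun j hj => ?_⟩
      have := Nat.find_min hex hj
      push_neg at this
      exact this
    have hkey1 : r ≤ (Real.sqrt (n:ℝ) * a / d) * d ^ m := by
      rcases Nat.eq_zero_or_pos m with h0 | hpos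
      · rw [h0, pow_zero, mul_one]
        calc r ≤ Real.sqrt (n:ℝ) * a := hrsq
          _ ≤ Real.sqrt (n:ℝ) * a / d := by
              rw [le_div_iff₀ hd0]
              nlinarith
      · have hlt := hmmin (m-1) (by omega)
        have heq : Real.sqrt (n:ℝ) * (d ^ (m-1) * a) = (Real.sqrt (n:ℝ) * a / d) * d ^ m := by
          have hm1 : m - 1 + 1 = m := Nat.succ_pred_eq_of_pos hpos
          rw [← hm1, pow_succ]
          field_simp
          ring
          congr 1; omega
        linarith
    obtain ⟨σ, hxσ⟩ := Set.mem_iUnion.1 (by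
      have := Set.mem_iInter.1 (hEdef ▸ hx) m
      rwa [happrox m] at this)
    have hsub : Cyl n σ ⊆ (pim n a d) ⁻¹' (closedBall x r) := by
      intro ω hω
      have hcode : (fun j : Fin m => ω (j:ℕ)) = σ := funext fun j => hω j
      have hmem : pim n a d ω ∈ cube n a d σ := by
        rw [← hcode]
        exact fun i => pim_mem_cube' n a d ha.le hd0.le hd1 ω m i
      have hdist := dist_le_of_mem_cube n a d ha.le hd0.le σ (pim n a d ω) x hmem hxσ
      exact Metric.mem_closedBall.2 (le_trans hdist hPm)
    have hb1 : ENNReal.ofReal lam * ν (Cyl n σ) ≤ μ (closedBall x r) := by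
      rw [hμapp _ measurableSet_closedBall]
      exact mul_le_mul_right (measure_mono hsub) _
    rw [hν_def, nu_cyl n σ, hconv m] at hb1
    refine le_trans ?_ hb1
    rw [← ENNReal.ofReal_mul hlampos.le]
    apply ENNReal.ofReal_le_ofReal
    calc r ^ t ≤ ((Real.sqrt (n:ℝ) * a / d) * d ^ m) ^ t :=
          Real.rpow_le_rpow hr.le hkey1 ht.le
      _ = lam * (d ^ m) ^ t := by
          rw [Real.mul_rpow (by positivity) (by positivity), hlam_def]
  · -- upper bound
    have h12 : (0:ℝ) < 1 - 2*d := by linarith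
    have hex : ∃ k : ℕ, (1 - 2*d) * (d ^ k * a) ≤ 2 * r := by
      obtain ⟨k, hk⟩ := exists_pow_lt_of_lt_one
        (show (0:ℝ) < 2 * r / ((1 - 2*d) * a) by positivity) hd1
      refine ⟨k, ?_⟩
      have := (lt_div_iff₀ (by positivity : (0:ℝ) < (1 - 2*d) * a)).1 hk
      nlinarith
    obtain ⟨k, hPk, hkmin⟩ : ∃ k, (1 - 2*d) * (d ^ k * a) ≤ 2 * r ∧
        ∀ j < k, 2 * r < (1 - 2*d) * (d ^ j * a) := by
      refine ⟨Nat.find hex, Nat.find_spec hex, fun j hj => ?_⟩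
      have := Nat.find_min hex hj
      push_neg at this
      exact this
    have hdk : d ^ k ≤ 2 * r / ((1 - 2*d) * a) := by
      rw [le_div_iff₀ (by positivity)]
      nlinarith
    have hνball : ν ((pim n a d) ⁻¹' (closedBall x r)) ≤ ((2 : ENNReal) ^ (n * k))⁻¹ := by
      rcases Set.eq_empty_or_nonempty ((pim n a d) ⁻¹' (closedBall x r)) with he | ⟨ω₀, hω₀⟩
      · rw [he, measure_empty]
        exact zero_le
      · have hsub : (pim n a d) ⁻¹' (closedBall x r) ⊆ Cyl n (fun j : Fin k => ω₀ (j:ℕ)) := by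
          intro ω hω
          have hcodes : (fun j : Fin k => ω (j:ℕ)) = (fun j : Fin k => ω₀ (j:ℕ)) := by
            by_contra hne'
            rcases Nat.eq_zero_or_pos k with h0 | hpos
            · subst h0
              exact hne' (funext fun j => j.elim0)
            · obtain ⟨k', rfl⟩ : ∃ k', k = k' + 1 := ⟨k-1, by omega⟩
              have hsep := separation n a d ha.le hd0 hd2 k' _ _ hne'
                (pim n a d ω) (fun i => pim_mem_cube' n a d ha.le hd0.le hd1 ω (k'+1) i)
                (pim n a d ω₀) (fun i => pim_mem_cube' n a d ha.le hd0.le hd1 ω₀ (k'+1) i)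
              have hd2r : dist (pim n a d ω) (pim n a d ω₀) ≤ 2 * r := by
                have h1 := Metric.mem_closedBall.1 hω
                have h2 := Metric.mem_closedBall.1 hω₀
                calc dist (pim n a d ω) (pim n a d ω₀)
                    ≤ dist (pim n a d ω) x + dist x (pim n a d ω₀) := dist_triangle _ _ _
                  _ ≤ r + r := add_le_add h1 (by rw [dist_comm]; exact h2)
                  _ = 2 * r := by ring
              have := hkmin k' (by omega)
              linarith
          exact fun j => congrFun hcodes j
        exact le_trans (measure_mono hsub) (le_of_eq (by rw [hν_def, nu_cyl n _]))
    have hfin : μ (closedBall x r) ≤ ENNReal.ofReal (lam * (d ^ k) ^ t) := by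
      rw [hμapp _ measurableSet_closedBall]
      refine le_trans (mul_le_mul_right hνball _) ?_
      rw [hconv k, ← ENNReal.ofReal_mul hlampos.le]
    refine le_trans hfin (ENNReal.ofReal_le_ofReal ?_)
    have hbase : (Real.sqrt (n:ℝ) * a / d) * d ^ k ≤ Cb * r := by
      have heq : (Real.sqrt (n:ℝ) * a / d) * (2 * r / ((1 - 2*d) * a)) = Cb * r := by
        rw [hCb_def]
        field_simp
      calc (Real.sqrt (n:ℝ) * a / d) * d ^ k
          ≤ (Real.sqrt (n:ℝ) * a / d) * (2 * r / ((1 - 2*d) * a)) :=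
            mul_le_mul_of_nonneg_left hdk (by positivity)
        _ = Cb * r := heq
    calc lam * (d ^ k) ^ t = ((Real.sqrt (n:ℝ) * a / d) * d ^ k) ^ t := by
          rw [Real.mul_rpow (by positivity) (by positivity), hlam_def]
      _ ≤ (Cb * r) ^ t := Real.rpow_le_rpow (by positivity) hbase ht.le
      _ = C * r ^ t := by rw [Real.mul_rpow (by linarith) hr.le, hC_def]
end

section
/- Direction-finding lemma: let 0 < δ with C_1(n) C_2(n) δ < 1 (dimensional constants), let ε = δ^{2n+3}, and let x_1,…,x_m, y_1,…,y_m ∈ B(0,1) ⊂ ℝ^n with m ≤ C_2(n)^{1/2} δ^{-n} and pairwise distances |x_i − x_j| ≥ δ and |y_i − y_j| ≥ δ for i ≠ j. Then there exists a unit vector θ ∈ S^{n−1} such that |θ·(x_i − x_j)| > 5ε and |θ·(y_i − y_j)| > 5ε for all i ≠ j. -/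
open Metric MeasureTheory

lemma coord_le_norm {n : ℕ} (w : EuclideanSpace ℝ (Fin n)) (i : Fin n) : |w i| ≤ ‖w‖ := by
  have h : (inner ℝ (EuclideanSpace.single i (1:ℝ)) w : ℝ) = w i := by
    simp [EuclideanSpace.inner_single_left]
  calc |w i| = |(inner ℝ (EuclideanSpace.single i (1:ℝ)) w : ℝ)| := by rw [h]
    _ ≤ ‖EuclideanSpace.single i (1:ℝ)‖ * ‖w‖ := abs_real_inner_le_norm _ _
    _ = ‖w‖ := by simp [EuclideanSpace.norm_single]

lemma slab_vol {n : ℕ} (hn : 1 ≤ n) (v : EuclideanSpace ℝ (Fin n)) (hv : v ≠ 0) (c : ℝ) :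
    volume ({θ : EuclideanSpace ℝ (Fin n) | |(inner ℝ θ v : ℝ)| ≤ c} ∩ closedBall 0 1)
      ≤ ENNReal.ofReal (2 * (c / ‖v‖)) * ENNReal.ofReal 2 ^ (n - 1) := by
  obtain ⟨k, rfl⟩ : ∃ k, n = k + 1 := ⟨n - 1, (Nat.succ_pred_eq_of_pos hn).symm⟩
  have hvn : (0:ℝ) < ‖v‖ := norm_pos_iff.2 hv
  set u : EuclideanSpace ℝ (Fin (k+1)) := ‖v‖⁻¹ • v with hu
  have hun : ‖u‖ = 1 := by
    rw [hu, norm_smul, norm_inv, norm_norm, inv_mul_cancel₀ hvn.ne']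
  have hortho : Orthonormal ℝ (({0} : Set (Fin (k+1))).restrict (fun _ => u)) := by
    rw [orthonormal_iff_ite]
    intro i j
    have : i = j := Subsingleton.elim i j
    subst this
    rw [if_pos rfl]
    show (inner ℝ u u : ℝ) = 1
    rw [real_inner_self_eq_norm_sq, hun]; norm_num
  obtain ⟨b, hb⟩ := hortho.exists_orthonormalBasis_extension_of_card_eq
    (by simp [finrank_euclideanSpace])
  have hb0 : b 0 = u := hb 0 rfl
  set c' := c / ‖v‖ with hc'
  have hkey : ∀ θ : EuclideanSpace ℝ (Fin (k+1)), (inner ℝ θ v : ℝ) = ‖v‖ * b.repr θ 0 := by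
    intro θ
    rw [b.repr_apply_apply, hb0, hu, real_inner_smul_left, real_inner_comm]
    field_simp
  set S : Set (EuclideanSpace ℝ (Fin (k+1))) := {w | |w 0| ≤ c'} ∩ closedBall 0 1 with hS
  have hSm : MeasurableSet S := by
    apply MeasurableSet.inter _ measurableSet_closedBall
    have hc : Continuous fun w : EuclideanSpace ℝ (Fin (k+1)) => |w 0| :=
      ((continuous_apply (0 : Fin (k+1))).comp (PiLp.continuous_ofLp _ _)).abs
    exact hc.measurable measurableSet_Iic
  have hpre : {θ : EuclideanSpace ℝ (Fin (k+1)) | |(inner ℝ θ v : ℝ)| ≤ c} ∩ closedBall 0 1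
      = ⇑b.repr ⁻¹' S := by
    ext θ
    simp only [Set.mem_inter_iff, Set.mem_setOf_eq, Set.mem_preimage, hS,
      mem_closedBall_zero_iff, b.repr.norm_map]
    constructor
    · rintro ⟨h1, h2⟩
      refine ⟨?_, h2⟩
      rw [hkey θ, abs_mul, abs_of_pos hvn] at h1
      rw [hc', le_div_iff₀ hvn]
      linarith
    · rintro ⟨h1, h2⟩
      refine ⟨?_, h2⟩
      rw [hkey θ, abs_mul, abs_of_pos hvn]
      rw [hc', le_div_iff₀ hvn] at h1
      linarith
  rw [hpre, b.measurePreserving_repr.measure_preimage hSm.nullMeasurableSet]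
  set t : Fin (k+1) → Set ℝ := fun i => if i = 0 then Set.Icc (-c') c' else Set.Icc (-1) 1 with ht
  have hsub : S ⊆ ((MeasurableEquiv.toLp 2 (Fin (k+1) → ℝ)).symm) ⁻¹' (Set.univ.pi t) := by
    rintro w ⟨h1, h2⟩
    intro i _
    show _ ∈ t i
    rw [ht]
    by_cases hi : i = 0
    · subst hi
      simpa [Set.mem_Icc] using abs_le.1 h1
    · simp only [if_neg hi, Set.mem_Icc]
      refine abs_le.1 ?_
      exact le_trans (coord_le_norm w i) (mem_closedBall_zero_iff.1 h2)
  have hIcc1 : volume (Set.Icc (-c') c') = ENNReal.ofReal (2 * c') := by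
    rw [Real.volume_Icc]
    congr 1
    ring
  have hIcc2 : volume (Set.Icc (-(1:ℝ)) 1) = ENNReal.ofReal 2 := by
    rw [Real.volume_Icc]; norm_num
  calc volume S ≤ volume (((MeasurableEquiv.toLp 2 (Fin (k+1) → ℝ)).symm) ⁻¹' (Set.univ.pi t)) :=
        measure_mono hsub
    _ = volume (Set.univ.pi t) := by
        rw [(EuclideanSpace.volume_preserving_symm_measurableEquiv_toLp (Fin (k+1))).measure_preimage]
        refine (MeasurableSet.univ_pi fun i => ?_).nullMeasurableSet
        have hti : t i = if i = 0 then Set.Icc (-c') c' else Set.Icc (-1) 1 := rfl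
        rw [hti]
        split <;> exact measurableSet_Icc
    _ = ∏ i : Fin (k+1), volume (t i) := volume_pi_pi t
    _ ≤ ENNReal.ofReal (2 * c') * ENNReal.ofReal 2 ^ (k + 1 - 1) := by
        rw [Fin.prod_univ_succ]
        have h0 : volume (t 0) = ENNReal.ofReal (2 * c') := by rw [ht]; simp only [if_pos rfl]; exact hIcc1
        have h2 : ∀ i : Fin k, volume (t i.succ) = ENNReal.ofReal 2 := by
          intro i
          rw [ht]
          simp only [if_neg (Fin.succ_ne_zero i)]
          exact hIcc2
        rw [h0, Finset.prod_congr rfl (fun i _ => h2 i), Finset.prod_const]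
        simp

theorem stmt15 (n : ℕ) (hn : 1 ≤ n) :
    ∃ C1 C2 : ℝ, 0 < C1 ∧ 0 < C2 ∧
      ∀ δ : ℝ, 0 < δ → C1 * C2 * δ < 1 →
        ∀ (m : ℕ) (x y : Fin m → EuclideanSpace ℝ (Fin n)),
          (m : ℝ) ≤ C2 ^ (1 / 2 : ℝ) * δ ^ (-(n : ℝ)) →
          (∀ i, x i ∈ closedBall (0 : EuclideanSpace ℝ (Fin n)) 1) →
          (∀ i, y i ∈ closedBall (0 : EuclideanSpace ℝ (Fin n)) 1) →
          (∀ i j, i ≠ j → δ ≤ dist (x i) (x j)) →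
          (∀ i j, i ≠ j → δ ≤ dist (y i) (y j)) →
          ∃ θ : EuclideanSpace ℝ (Fin n), ‖θ‖ = 1 ∧
            ∀ i j, i ≠ j →
              5 * δ ^ (2 * n + 3) < |(inner ℝ θ (x i - x j) : ℝ)| ∧
              5 * δ ^ (2 * n + 3) < |(inner ℝ θ (y i - y j) : ℝ)| := by
  set E := EuclideanSpace ℝ (Fin n) with hE
  set V : ENNReal := volume (ball (0:E) 1) with hV
  have hV0 : 0 < V := measure_ball_pos volume 0 one_pos
  have hVtop : V ≠ ⊤ := measure_ball_lt_top.ne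
  set VR := V.toReal with hVR
  have hVR0 : 0 < VR := ENNReal.toReal_pos hV0.ne' hVtop
  refine ⟨5 * 2^(n+3) / VR, 1, by positivity, one_pos, ?_⟩
  intro δ hδ hδ1 m x y hm hx hy hsepx hsepy
  rw [mul_one] at hδ1
  rw [Real.one_rpow, one_mul, Real.rpow_neg hδ.le, Real.rpow_natCast] at hm
  by_cases hm2 : m < 2
  · refine ⟨EuclideanSpace.single ⟨0, hn⟩ 1, by simp [EuclideanSpace.norm_single], ?_⟩
    intro i j hij
    exact absurd (Fin.ext (by omega)) hij
  push_neg at hm2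
  have hδ2 : δ ≤ 2 := by
    have h01 : (⟨0, by omega⟩ : Fin m) ≠ ⟨1, by omega⟩ := by simp [Fin.ext_iff]
    have h := hsepx _ _ h01
    have h1 := mem_closedBall.1 (hx ⟨0, by omega⟩)
    have h2 := mem_closedBall.1 (hx ⟨1, by omega⟩)
    have h3 := dist_triangle (x ⟨0, by omega⟩) 0 (x ⟨1, by omega⟩)
    rw [dist_comm (0:E)] at h3
    linarith
  set ε5 := 5 * δ ^ (2 * n + 3) with hε5def
  have hε5 : 0 < ε5 := by positivity
  set BadX : Fin m × Fin m → Set E := fun p =>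
    {θ : E | |(inner ℝ θ (x p.1 - x p.2) : ℝ)| ≤ ε5} ∩ closedBall 0 1 with hBX
  set BadY : Fin m × Fin m → Set E := fun p =>
    {θ : E | |(inner ℝ θ (y p.1 - y p.2) : ℝ)| ≤ ε5} ∩ closedBall 0 1 with hBY
  set P : Finset (Fin m × Fin m) := Finset.univ.filter (fun p => p.1 ≠ p.2) with hP
  set Bad : Set E := ⋃ p ∈ P, (BadX p ∪ BadY p) with hBad
  set B : ENNReal := ENNReal.ofReal (2 * (ε5 / δ) * 2^(n-1)) with hB
  have hslab : ∀ (v : E), δ ≤ ‖v‖ → volume ({θ : E | |(inner ℝ θ v : ℝ)| ≤ ε5} ∩ closedBall 0 1) ≤ B := by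
    intro v hv
    have hv0 : v ≠ 0 := by
      intro h; rw [h, norm_zero] at hv; linarith
    refine le_trans (slab_vol hn v hv0 ε5) ?_
    have hBeq : B = ENNReal.ofReal (2 * (ε5 / δ)) * ENNReal.ofReal 2 ^ (n - 1) := by
      rw [hB, ← ENNReal.ofReal_pow (by norm_num : (0:ℝ) ≤ 2), ← ENNReal.ofReal_mul (by positivity)]
    rw [hBeq]
    have hle : ENNReal.ofReal (2 * (ε5 / ‖v‖)) ≤ ENNReal.ofReal (2 * (ε5 / δ)) :=
      ENNReal.ofReal_le_ofReal (by
        have : ε5 / ‖v‖ ≤ ε5 / δ := div_le_div_of_nonneg_left hε5.le hδ hv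
        linarith)
    exact mul_le_mul_left hle _
  have hbound : ∀ p ∈ P, volume (BadX p ∪ BadY p) ≤ B + B := by
    intro p hp
    have hpne : p.1 ≠ p.2 := (Finset.mem_filter.1 hp).2
    have h1 : δ ≤ ‖x p.1 - x p.2‖ := by rw [← dist_eq_norm]; exact hsepx _ _ hpne
    have h2 : δ ≤ ‖y p.1 - y p.2‖ := by rw [← dist_eq_norm]; exact hsepy _ _ hpne
    exact le_trans (measure_union_le _ _) (add_le_add (hslab _ h1) (hslab _ h2))
  have hTreal : (m:ℝ)^2 * (2 * (2 * (ε5 / δ) * 2^(n-1))) < VR := by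
    have hmm : (m:ℝ)^2 ≤ (δ^(2*n))⁻¹ := by
      have h1 : (0:ℝ) ≤ (m:ℝ) := Nat.cast_nonneg m
      have : (m:ℝ)^2 ≤ ((δ^n)⁻¹)^2 := by
        apply pow_le_pow_left₀ h1 hm
      calc (m:ℝ)^2 ≤ ((δ^n)⁻¹)^2 := this
        _ = (δ^(2*n))⁻¹ := by rw [inv_pow, ← pow_mul, mul_comm n 2]
    have hεδ : ε5 / δ = 5 * δ^(2*n+2) := by
      rw [hε5def]
      field_simp
      rw [pow_succ]
      ring
    have h2pow : (2:ℝ) * (2 * 2^(n-1)) = 2^(n+1) := by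
      have hh : n - 1 + 2 = n + 1 := by omega
      rw [← hh, pow_add]
      ring
    have hδpos2n : (0:ℝ) < δ^(2*n) := by positivity
    have key : (m:ℝ)^2 * (2 * (2 * (ε5 / δ) * 2^(n-1))) ≤ 5 * 2^(n+1) * δ^2 := by
      rw [hεδ]
      have expand : (2:ℝ) * (2 * (5 * δ^(2*n+2)) * 2^(n-1)) = 5 * 2^(n+1) * (δ^(2*n) * δ^2) := by
        rw [pow_add]
        linear_combination (5 * δ^(2*n) * δ^2) * h2pow
      rw [expand, ← mul_assoc]
      calc (m:ℝ)^2 * (5 * 2^(n+1)) * (δ^(2*n) * δ^2)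
          ≤ (δ^(2*n))⁻¹ * (5 * 2^(n+1)) * (δ^(2*n) * δ^2) := by
            apply mul_le_mul_of_nonneg_right (mul_le_mul_of_nonneg_right hmm (by positivity)) (by positivity)
        _ = 5 * 2^(n+1) * δ^2 := by field_simp
    have hδlt : δ < VR / (5 * 2^(n+3)) := by
      rw [div_mul_eq_mul_div, div_lt_one hVR0] at hδ1
      rw [lt_div_iff₀ (by positivity)]
      linarith
    calc (m:ℝ)^2 * (2 * (2 * (ε5 / δ) * 2^(n-1))) ≤ 5 * 2^(n+1) * δ^2 := key
      _ ≤ 5 * 2^(n+1) * (2 * δ) := by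
          have hd : δ^2 ≤ 2 * δ := by nlinarith
          have hc : (0:ℝ) ≤ 5 * 2^(n+1) := by positivity
          nlinarith
      _ = 5 * 2^(n+2) * δ := by ring
      _ < 5 * 2^(n+2) * (VR / (5 * 2^(n+3))) := by
          apply mul_lt_mul_of_pos_left hδlt (by positivity)
      _ ≤ VR := by
          have hp : (2:ℝ)^(n+3) = 2^(n+2)*2 := pow_succ 2 (n+2)
          have ha : (2:ℝ)^(n+2) ≠ 0 := by positivity
          have heq : 5 * (2:ℝ)^(n+2) * (VR / (5 * (2^(n+2)*2))) = VR/2 := by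
            field_simp
          rw [hp, heq]
          linarith
  have htot : volume Bad < V := by
    calc volume Bad ≤ ∑ p ∈ P, volume (BadX p ∪ BadY p) := measure_biUnion_finset_le P _
      _ ≤ ∑ p ∈ P, (B + B) := Finset.sum_le_sum hbound
      _ = P.card * (B + B) := by rw [Finset.sum_const, nsmul_eq_mul]
      _ ≤ ENNReal.ofReal ((m:ℝ)^2) * (B + B) := by
          gcongr
          have hcard : P.card ≤ m^2 := by
            calc P.card ≤ (Finset.univ : Finset (Fin m × Fin m)).card := Finset.card_filter_le _ _
              _ = m * m := by simp
              _ = m^2 := (sq m).symm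
          calc (P.card : ENNReal) ≤ (m^2 : ℕ) := Nat.cast_le.2 hcard
            _ = ENNReal.ofReal ((m:ℝ)^2) := by
                rw [← ENNReal.ofReal_natCast]
                norm_num
      _ = ENNReal.ofReal ((m:ℝ)^2 * (2 * (2 * (ε5 / δ) * 2^(n-1)))) := by
          rw [hB, ← ENNReal.ofReal_add (by positivity) (by positivity),
            ← ENNReal.ofReal_mul (by positivity)]
          congr 1
          ring
      _ < ENNReal.ofReal VR := by
          exact (ENNReal.ofReal_lt_ofReal_iff hVR0).2 hTreal
      _ = V := ENNReal.ofReal_toReal hVtop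
  have hne : (ball (0:E) 1 \ Bad).Nonempty := by
    rw [Set.nonempty_iff_ne_empty]
    intro h
    have hsub : ball (0:E) 1 ⊆ Bad := by
      rw [Set.diff_eq_empty] at h; exact h
    exact absurd (measure_mono hsub) (not_le.2 htot)
  obtain ⟨θ₀, hθball, hθBad⟩ := hne
  have hθcb : θ₀ ∈ closedBall (0:E) 1 := ball_subset_closedBall hθball
  have hgood : ∀ i j, i ≠ j → ε5 < |(inner ℝ θ₀ (x i - x j) : ℝ)| ∧ ε5 < |(inner ℝ θ₀ (y i - y j) : ℝ)| := by
    intro i j hij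
    have hpP : (i, j) ∈ P := by simp [hP, hij]
    have hnX : θ₀ ∉ BadX (i, j) ∪ BadY (i, j) := by
      intro hmem
      exact hθBad (Set.mem_biUnion hpP hmem)
    constructor
    · by_contra h
      push_neg at h
      exact hnX (Or.inl ⟨h, hθcb⟩)
    · by_contra h
      push_neg at h
      exact hnX (Or.inr ⟨h, hθcb⟩)
  have hθ0 : θ₀ ≠ 0 := by
    intro h
    have := (hgood ⟨0, by omega⟩ ⟨1, by omega⟩ (by simp [Fin.ext_iff])).1
    rw [h] at this
    simp [inner_zero_left] at this
    linarith
  have hθnorm : 0 < ‖θ₀‖ := norm_pos_iff.2 hθ0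
  have hθlt : ‖θ₀‖ < 1 := mem_ball_zero_iff.1 hθball
  refine ⟨‖θ₀‖⁻¹ • θ₀, ?_, ?_⟩
  · rw [norm_smul, norm_inv, norm_norm, inv_mul_cancel₀ hθnorm.ne']
  · intro i j hij
    have hprod : ‖θ₀‖ * ‖θ₀‖⁻¹ = 1 := mul_inv_cancel₀ hθnorm.ne'
    have hinv : (1:ℝ) ≤ ‖θ₀‖⁻¹ := by nlinarith [inv_pos.2 hθnorm]
    have habs : ∀ v : E, |(inner ℝ (‖θ₀‖⁻¹ • θ₀) v : ℝ)| = ‖θ₀‖⁻¹ * |(inner ℝ θ₀ v : ℝ)| := by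
      intro v
      rw [real_inner_smul_left, abs_mul, abs_of_pos (inv_pos.2 hθnorm)]
    obtain ⟨h1, h2⟩ := hgood i j hij
    constructor
    · rw [habs]
      calc 5 * δ ^ (2*n+3) = ε5 := rfl
        _ < |(inner ℝ θ₀ (x i - x j) : ℝ)| := h1
        _ ≤ ‖θ₀‖⁻¹ * |(inner ℝ θ₀ (x i - x j) : ℝ)| := le_mul_of_one_le_left (abs_nonneg _) hinv
    · rw [habs]
      calc 5 * δ ^ (2*n+3) = ε5 := rfl
        _ < |(inner ℝ θ₀ (y i - y j) : ℝ)| := h2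
        _ ≤ ‖θ₀‖⁻¹ * |(inner ℝ θ₀ (y i - y j) : ℝ)| := le_mul_of_one_le_left (abs_nonneg _) hinv
end
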